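/- Soundness of one round of the graph non-isomorphism protocol: let V be a finite type with decidable equality and G₁ G₂ : SimpleGraph V with Nonempty (G₁ ≃g G₂). Then for every strategy s : SimpleGraph V → Bool of Merlin, the number of pairs (b, π) ∈ Bool × Equiv.Perm V with s (SimpleGraph.map π.toEmbedding (if b then G₁ else G₂)) = b equals Fintype.card (Equiv.Perm V); i.e., Merlin identifies Arthur's coin with probability exactly 1/2. -/

import Mathlib

theorem graph_noniso_one_round_soundness {V : Type*} [Fintype V] [DecidableEq V]
    (G₁ G₂ : SimpleGraph V) (h : Nonempty (G₁ ≃g G₂))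
    (s : SimpleGraph V → Bool) :
    (Finset.univ.filter fun bp : Bool × Equiv.Perm V =>
        s (SimpleGraph.map bp.2.toEmbedding (if bp.1 then G₁ else G₂)) = bp.1).card =
      Fintype.card (Equiv.Perm V) := by
  classical
  obtain ⟨e⟩ := h
  set σ : Equiv.Perm V := e.toEquiv with hσ
  have hmap : SimpleGraph.map σ.toEmbedding G₁ = G₂ := by
    ext a b
    simp only [SimpleGraph.map_adj]
    constructor
    · rintro ⟨u, v, huv, rfl, rfl⟩
      exact e.map_adj_iff.mpr huv
    · intro hab
      refine ⟨σ.symm a, σ.symm b, ?_, by simp, by simp⟩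
      have : G₂.Adj (σ (σ.symm a)) (σ (σ.symm b)) := by simpa using hab
      exact e.map_adj_iff.mp this
  have hmap' : SimpleGraph.map (σ⁻¹).toEmbedding G₂ = G₁ := by
    rw [← hmap, SimpleGraph.map_map, ← Function.Embedding.coe_trans, ← Equiv.trans_toEmbedding]
    have : σ.trans σ⁻¹ = Equiv.refl V := by ext x; simp
    rw [this]
    simp [SimpleGraph.map_id]
    exact SimpleGraph.map_id G₁
  set P : Bool × Equiv.Perm V → Prop :=
    fun bp => s (SimpleGraph.map bp.2.toEmbedding (if bp.1 then G₁ else G₂)) = bp.1 with hP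
  -- the involution
  let c : Bool → Equiv.Perm V := fun b => if b then σ⁻¹ else σ
  let Φ : Bool × Equiv.Perm V → Bool × Equiv.Perm V := fun bp => (!bp.1, bp.2 * c bp.1)
  have hgraph : ∀ bp : Bool × Equiv.Perm V,
      SimpleGraph.map (Φ bp).2.toEmbedding (if (Φ bp).1 then G₁ else G₂)
        = SimpleGraph.map bp.2.toEmbedding (if bp.1 then G₁ else G₂) := by
    rintro ⟨b, π⟩
    cases b <;>
      simp only [Φ, c, Bool.not_true, Bool.not_false, if_true, if_false,
        Bool.false_eq_true, ite_true, ite_false] <;>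
      · show SimpleGraph.map (Equiv.trans _ π).toEmbedding _ = _
        rw [Equiv.trans_toEmbedding, Function.Embedding.coe_trans, ← SimpleGraph.map_map]
        first | rw [hmap'] | rw [hmap]
  have key : (Finset.univ.filter P).card
      = (Finset.univ.filter fun bp => ¬ P bp).card := by
    apply Finset.card_bij (fun bp _ => Φ bp)
    · rintro ⟨b, π⟩ hb
      simp only [Finset.mem_filter, Finset.mem_univ, true_and] at hb ⊢
      rw [hP]
      simp only [hgraph ⟨b, π⟩]
      rw [hP] at hb
      simp only at hb
      rw [hb]
      cases b <;> simp [Φ]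
    · rintro ⟨b₁, π₁⟩ _ ⟨b₂, π₂⟩ _ hEq
      simp only [Φ, Prod.mk.injEq] at hEq
      obtain ⟨h1, h2⟩ := hEq
      have hb : b₁ = b₂ := by cases b₁ <;> cases b₂ <;> simp_all
      subst hb
      refine Prod.ext rfl ?_
      simpa using mul_right_cancel h2
    · rintro ⟨b, π⟩ hb
      refine ⟨Φ (b, π), ?_, ?_⟩
      · simp only [Finset.mem_filter, Finset.mem_univ, true_and] at hb ⊢
        rw [hP]
        simp only [hgraph ⟨b, π⟩]
        rw [hP] at hb
        simp only at hb
        cases b <;> simp_all [Φ]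
      · show ((!(!b)), π * c b * c (!b)) = (b, π)
        cases b <;> simp [c, mul_assoc]
  have htot := Finset.card_filter_add_card_filter_not (s := Finset.univ) P
  rw [key] at htot
  have : (Finset.univ.filter fun bp => ¬ P bp).card * 2
      = Fintype.card (Bool × Equiv.Perm V) := by
    rw [Fintype.card] at *
    omega
  rw [Fintype.card_prod, Fintype.card_bool] at this
  rw [key]
  omega
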